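/- Let n ≥ 1 be an integer. Then C(n,1) = 2^{2n}·n!; that is, every f ∈ 𝒟ⁿ([0,1]) that is not identically zero satisfies m_n(f) ≤ 2^{2n}·n! · ∫_0^1 |f(t)| dt, and 2^{2n}·n! is the smallest constant with this property. -/

import Mathlib

open Set Polynomial Nat MeasureTheory ENNReal

/-- `fd 0` belongs to `𝒟ⁿ([a,b])`, with `fd k` its `k`-th derivative: `fd k` exists and is
continuous on `[a,b]` for `0 ≤ k ≤ n-1`, and `fd n` is the derivative of `fd (n-1)` on `(a,b)`. -/
def IsDn (n : ℕ) (a b : ℝ) (fd : ℕ → ℝ → ℝ) : Prop :=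
  (∀ k, k + 1 < n → ∀ x ∈ Set.Icc a b, HasDerivWithinAt (fd k) (fd (k + 1) x) (Set.Icc a b) x) ∧
  ContinuousOn (fd (n - 1)) (Set.Icc a b) ∧
  (∀ x ∈ Set.Ioo a b, HasDerivAt (fd (n - 1)) (fd n x) x)

/-- `m_n(f) = inf_{a<t<b} |f^{(n)}(t)|`. -/
noncomputable def mIoo (n : ℕ) (a b : ℝ) (fd : ℕ → ℝ → ℝ) : ℝ :=
  sInf ((fun t => |fd n t|) '' Set.Ioo a b)

/-- `‖f‖_{p,[a,b]}` for `0 < p < ∞`. -/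
noncomputable def Lp (p a b : ℝ) (f : ℝ → ℝ) : ℝ :=
  (∫ t in a..b, |f t| ^ p) ^ (1 / p)

/-- `‖f‖_{∞,[a,b]}`. -/
noncomputable def Lsup (a b : ℝ) (f : ℝ → ℝ) : ℝ :=
  sSup ((fun t => |f t|) '' Set.Icc a b)

/-- `‖f‖_{p,[a,b]}` for `0 < p ≤ ∞`. -/
noncomputable def pnorm (p : ℝ≥0∞) (a b : ℝ) (f : ℝ → ℝ) : ℝ :=
  if p = ⊤ then Lsup a b f else Lp p.toReal a b f

/-- `D**(n,p,[a,b])`, `p` finite. -/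
noncomputable def Dstar (n : ℕ) (p a b : ℝ) : ℝ :=
  sInf { c | ∃ Q : Polynomial ℝ, Q.Monic ∧ Q.natDegree = n ∧ c = Lp p a b (fun x => Q.eval x) }

/-- `D**(n,∞,[a,b])`. -/
noncomputable def DstarInf (n : ℕ) (a b : ℝ) : ℝ :=
  sInf { c | ∃ Q : Polynomial ℝ, Q.Monic ∧ Q.natDegree = n ∧ c = Lsup a b (fun x => Q.eval x) }

/-- `C(n,p)`, `p` finite. -/
noncomputable def Cnp (n : ℕ) (p : ℝ) : ℝ :=
  sSup { c | ∃ fd : ℕ → ℝ → ℝ, IsDn n 0 1 fd ∧ (∃ x ∈ Set.Icc (0:ℝ) 1, fd 0 x ≠ 0) ∧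
    c = mIoo n 0 1 fd / Lp p 0 1 (fd 0) }

/-- `C(n,∞)`. -/
noncomputable def CnpInf (n : ℕ) : ℝ :=
  sSup { c | ∃ fd : ℕ → ℝ → ℝ, IsDn n 0 1 fd ∧ (∃ x ∈ Set.Icc (0:ℝ) 1, fd 0 x ≠ 0) ∧
    c = mIoo n 0 1 fd / Lsup 0 1 (fd 0) }

namespace Stmt13Aux
open Polynomial.Chebyshev Real Finset



lemma C2eq : (C (2:ℝ)) = (2:ℝ[X]) := map_ofNat Polynomial.C 2

lemma twoXmul_coeff (p : ℝ[X]) (k : ℕ) : ((2:ℝ[X]) * X * p).coeff (k+1) = 2 * p.coeff k := by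
  have h : (2:ℝ[X]) * X * p = X * p * C 2 := by rw [C2eq]; ring
  rw [h, coeff_mul_C, coeff_X_mul, mul_comm]

lemma twoXmul_natDegree_le (p : ℝ[X]) : ((2:ℝ[X]) * X * p).natDegree ≤ p.natDegree + 1 := by
  calc ((2:ℝ[X]) * X * p).natDegree ≤ ((2:ℝ[X]) * X).natDegree + p.natDegree :=
        natDegree_mul_le
    _ ≤ 1 + p.natDegree := by
        refine Nat.add_le_add_right ?_ _
        calc ((2:ℝ[X]) * X).natDegree ≤ (2:ℝ[X]).natDegree + X.natDegree := natDegree_mul_le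
          _ ≤ 1 := by simp [natDegree_X]
    _ = p.natDegree + 1 := by ring

lemma chebU_aux (m : ℕ) :
    ((Chebyshev.U ℝ m).natDegree = m ∧ (Chebyshev.U ℝ m).coeff m = 2 ^ m) ∧
    ((Chebyshev.U ℝ ((m:ℤ)+1)).natDegree = m+1 ∧ (Chebyshev.U ℝ ((m:ℤ)+1)).coeff (m+1) = 2 ^ (m+1)) := by
  induction m with
  | zero =>
    have h0 : (Chebyshev.U ℝ ((0:ℕ):ℤ)) = 1 := by norm_num [U_zero]
    have h1 : ((0:ℕ):ℤ) + 1 = (1:ℤ) := by norm_num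
    rw [h0, h1, U_one]
    refine ⟨⟨by simp, by simp⟩, ?_, ?_⟩
    · have h : ((2:ℝ[X]) * X) = C 2 * X := by rw [C2eq]
      rw [h, natDegree_C_mul (by norm_num), natDegree_X]
    · simpa using twoXmul_coeff (1:ℝ[X]) 0
  | succ m ih =>
    obtain ⟨⟨hd1, hc1⟩, hd2, hc2⟩ := ih
    have key : Chebyshev.U ℝ ((m:ℤ)+2) =
        2 * X * Chebyshev.U ℝ ((m:ℤ)+1) - Chebyshev.U ℝ (m:ℤ) := U_add_two ℝ (m:ℤ)
    have hcoeff : (Chebyshev.U ℝ ((m:ℤ)+2)).coeff (m+2) = 2 ^ (m+2) := by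
      rw [key, coeff_sub, twoXmul_coeff, hc2,
        coeff_eq_zero_of_natDegree_lt (by rw [hd1]; omega)]
      ring
    have hdegle : (Chebyshev.U ℝ ((m:ℤ)+2)).natDegree ≤ m + 2 := by
      rw [key]
      refine natDegree_sub_le _ _ |>.trans ?_
      simp only [max_le_iff]
      exact ⟨(twoXmul_natDegree_le _).trans (by rw [hd2]), by rw [hd1]; omega⟩
    have hdeg : (Chebyshev.U ℝ ((m:ℤ)+2)).natDegree = m + 2 := by
      refine le_antisymm hdegle (le_natDegree_of_ne_zero ?_)
      rw [hcoeff]; positivity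
    have c1 : ((m+1:ℕ):ℤ) = (m:ℤ)+1 := by push_cast; ring
    have c2 : ((m:ℤ)+1)+1 = (m:ℤ)+2 := by ring
    rw [c1, c2]
    exact ⟨⟨hd2, hc2⟩, hdeg, hcoeff⟩

lemma chebU_natDegree (m : ℕ) : (Chebyshev.U ℝ m).natDegree = m := (chebU_aux m).1.1
lemma chebU_coeff (m : ℕ) : (Chebyshev.U ℝ m).coeff m = 2 ^ m := (chebU_aux m).1.2
lemma chebU_leadingCoeff (m : ℕ) : (Chebyshev.U ℝ m).leadingCoeff = 2 ^ m := by
  rw [leadingCoeff, chebU_natDegree, chebU_coeff]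

lemma chebT_aux (m : ℕ) :
    ((Chebyshev.T ℝ ((m:ℤ)+1)).natDegree = m+1 ∧ (Chebyshev.T ℝ ((m:ℤ)+1)).coeff (m+1) = 2 ^ m) ∧
    ((Chebyshev.T ℝ ((m:ℤ)+2)).natDegree = m+2 ∧ (Chebyshev.T ℝ ((m:ℤ)+2)).coeff (m+2) = 2 ^ (m+1)) := by
  induction m with
  | zero =>
    have h1 : ((0:ℕ):ℤ) + 1 = (1:ℤ) := by norm_num
    have h2 : ((0:ℕ):ℤ) + 2 = (2:ℤ) := by norm_num
    rw [h1, h2, T_one, T_two]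
    refine ⟨⟨by simp, by simp⟩, ?_, ?_⟩
    · have h : ((2:ℝ[X]) * X^2 - 1).coeff 2 = 2 := by
        rw [coeff_sub]
        have : ((2:ℝ[X]) * X^2) = C 2 * X^2 := by rw [C2eq]
        rw [this, coeff_C_mul, coeff_X_pow]
        simp [Polynomial.coeff_one]
      refine le_antisymm ?_ (le_natDegree_of_ne_zero (by rw [h]; norm_num))
      refine natDegree_sub_le _ _ |>.trans ?_
      simp only [max_le_iff]
      constructor
      · have : ((2:ℝ[X]) * X^2) = C 2 * X^2 := by rw [C2eq]
        rw [this, natDegree_C_mul (by norm_num), natDegree_X_pow]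
      · simp
    · rw [coeff_sub]
      have : ((2:ℝ[X]) * X^2) = C 2 * X^2 := by rw [C2eq]
      rw [this, coeff_C_mul, coeff_X_pow]
      simp [Polynomial.coeff_one]
  | succ m ih =>
    obtain ⟨⟨hd1, hc1⟩, hd2, hc2⟩ := ih
    have key : Chebyshev.T ℝ ((m:ℤ)+3) =
        2 * X * Chebyshev.T ℝ ((m:ℤ)+2) - Chebyshev.T ℝ ((m:ℤ)+1) := by
      have := T_add_two ℝ ((m:ℤ)+1)
      convert this using 2 <;> ring
    have hcoeff : (Chebyshev.T ℝ ((m:ℤ)+3)).coeff (m+3) = 2 ^ (m+2) := by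
      rw [key, coeff_sub]
      have : (m+3) = (m+2)+1 := by ring
      rw [this, twoXmul_coeff, hc2,
        coeff_eq_zero_of_natDegree_lt (by rw [hd1]; omega)]
      ring
    have hdeg : (Chebyshev.T ℝ ((m:ℤ)+3)).natDegree = m + 3 := by
      refine le_antisymm ?_ (le_natDegree_of_ne_zero (by rw [hcoeff]; positivity))
      rw [key]
      refine natDegree_sub_le _ _ |>.trans ?_
      simp only [max_le_iff]
      exact ⟨(twoXmul_natDegree_le _).trans (by rw [hd2]), by rw [hd1]; omega⟩
    have c1 : ((m+1:ℕ):ℤ)+1 = (m:ℤ)+2 := by push_cast; ring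
    have c2 : ((m+1:ℕ):ℤ)+2 = (m:ℤ)+3 := by push_cast; ring
    rw [c1, c2]
    exact ⟨⟨hd2, hc2⟩, by convert hdeg using 2, by convert hcoeff using 2⟩

lemma chebT_natDegree (m : ℕ) : (Chebyshev.T ℝ ((m:ℤ)+1)).natDegree = m+1 := (chebT_aux m).1.1
lemma chebT_coeff (m : ℕ) : (Chebyshev.T ℝ ((m:ℤ)+1)).coeff (m+1) = 2 ^ m := (chebT_aux m).1.2




/-- the alternating sum functional at Chebyshev extreme points -/
noncomputable def Lam (n : ℕ) (R : ℝ[X]) : ℝ :=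
  ∑ j ∈ Finset.range (n+1), (-1:ℝ)^j *
    (R.eval (Real.cos (j*(π/(n+1)))) - R.eval (Real.cos ((j+1)*(π/(n+1)))))

lemma lambda_linear (n : ℕ) (p q : ℝ[X]) (a : ℝ) :
    Lam n (p + C a * q) = Lam n p + a * Lam n q := by
  unfold Lam
  rw [Finset.mul_sum, ← Finset.sum_add_distrib]
  refine Finset.sum_congr rfl fun j _ => ?_
  simp only [eval_add, eval_mul, eval_C]
  ring

lemma lambda_C (n : ℕ) (a : ℝ) : Lam n (C a) = 0 := by
  unfold Lam; simp

lemma lambda_trig (n r : ℕ) (hr : 1 ≤ r) (hrn : r ≤ n) :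
    ∑ j ∈ Finset.range (n+1), (-1:ℝ)^j *
      (Real.cos (r*(j*(π/(n+1)))) - Real.cos (r*((j+1)*(π/(n+1))))) = 0 := by
  set β : ℝ := r*π/(2*(n+1)) with hβ
  have hn1 : (0:ℝ) < (n:ℝ)+1 := by positivity
  have hterm : ∀ j : ℕ, Real.cos (r*(j*(π/(n+1)))) - Real.cos (r*((j+1)*(π/(n+1))))
      = 2 * Real.sin β * Real.sin ((2*j+1)*β) := by
    intro j
    have e1 : (r:ℝ)*(j*(π/(n+1))) = (2*j+1)*β - β := by
      rw [hβ]; field_simp; ring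
    have e2 : (r:ℝ)*((j+1)*(π/(n+1))) = (2*j+1)*β + β := by
      rw [hβ]; field_simp; ring
    rw [e1, e2, Real.cos_sub, Real.cos_add]
    ring
  have htel : Real.cos β * ∑ j ∈ Finset.range (n+1), (-1:ℝ)^j * Real.sin ((2*j+1)*β) = 0 := by
    rw [Finset.mul_sum]
    have : ∀ j ∈ Finset.range (n+1),
        Real.cos β * ((-1:ℝ)^j * Real.sin ((2*j+1)*β))
          = (fun j : ℕ => ((-1:ℝ)^j * Real.sin (2*j*β))/2) j
            - (fun j : ℕ => ((-1:ℝ)^j * Real.sin (2*j*β))/2) (j+1) := by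
      intro j _
      simp only
      have e1 : (2*(j+1):ℝ)*β = (2*j+1)*β + β := by push_cast; ring
      have e2 : (2*j:ℝ)*β = (2*j+1)*β - β := by push_cast; ring
      push_cast
      rw [e1, e2, Real.sin_add, Real.sin_sub, pow_succ]
      ring
    rw [Finset.sum_congr rfl this, Finset.sum_range_sub']
    have h2 : (2*(n+1):ℝ)*β = r*π := by rw [hβ]; field_simp
    push_cast
    rw [h2]
    simp [Real.sin_nat_mul_pi]
  have hcos : Real.cos β ≠ 0 := by
    have h1 : 0 < β := by
      rw [hβ]
      have : (0:ℝ) < (r:ℝ) := by exact_mod_cast hr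
      positivity
    have h2 : β < π/2 := by
      rw [hβ]
      rw [div_lt_div_iff₀ (by positivity) (by norm_num)]
      have : (r:ℝ) < (n:ℝ)+1 := by
        have : (r:ℝ) ≤ (n:ℝ) := by exact_mod_cast hrn
        linarith
      calc (r:ℝ)*π*2 < ((n:ℝ)+1)*π*2 := by
            have hπ := Real.pi_pos; nlinarith
        _ = π*(2*((n:ℝ)+1)) := by ring
    exact ne_of_gt (Real.cos_pos_of_mem_Ioo ⟨by linarith [Real.pi_pos], h2⟩)
  have hS : ∑ j ∈ Finset.range (n+1), (-1:ℝ)^j * Real.sin ((2*j+1)*β) = 0 := by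
    rcases mul_eq_zero.1 htel with h | h
    · exact absurd h hcos
    · exact h
  calc ∑ j ∈ Finset.range (n+1), (-1:ℝ)^j *
        (Real.cos (r*(j*(π/(n+1)))) - Real.cos (r*((j+1)*(π/(n+1)))))
      = ∑ j ∈ Finset.range (n+1), (2*Real.sin β) * ((-1:ℝ)^j * Real.sin ((2*j+1)*β)) := by
        refine Finset.sum_congr rfl fun j _ => ?_
        rw [hterm j]; ring
    _ = (2*Real.sin β) * ∑ j ∈ Finset.range (n+1), (-1:ℝ)^j * Real.sin ((2*j+1)*β) := by
        rw [Finset.mul_sum]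
    _ = 0 := by rw [hS, mul_zero]

lemma lambda_T_poly (n r : ℕ) (hrn : r ≤ n) : Lam n (Chebyshev.T ℝ r) = 0 := by
  unfold Lam
  have hev : ∀ x : ℝ, (Chebyshev.T ℝ r).eval (Real.cos x) = Real.cos (r * x) := by
    intro x
    have := Polynomial.Chebyshev.T_real_cos x (r:ℤ)
    push_cast at this ⊢
    exact this
  rcases Nat.eq_zero_or_pos r with h0 | h1
  · subst h0; simp [hev]
  · simp only [hev]
    exact lambda_trig n r h1 hrn

lemma lambda_vanish (n : ℕ) : ∀ d, ∀ R : ℝ[X], R.natDegree ≤ d → d ≤ n → Lam n R = 0 := by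
  intro d
  induction d with
  | zero =>
    intro R hR _
    rw [Polynomial.eq_C_of_natDegree_le_zero hR]
    exact lambda_C n _
  | succ d ih =>
    intro R hR hdn
    set T : ℝ[X] := Chebyshev.T ℝ ((d:ℤ)+1) with hT
    have hTd : T.natDegree = d+1 := chebT_natDegree d
    have hTc : T.coeff (d+1) = 2^d := chebT_coeff d
    set a : ℝ := R.coeff (d+1) / 2^d with ha
    set R' : ℝ[X] := R - C a * T with hR'
    have hcoeff : R'.coeff (d+1) = 0 := by
      rw [hR', coeff_sub, coeff_C_mul, hTc, ha]
      field_simp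
      ring
    have hdegle : R'.natDegree ≤ d+1 := by
      rw [hR']
      refine natDegree_sub_le _ _ |>.trans ?_
      simp only [max_le_iff]
      refine ⟨hR, ?_⟩
      refine natDegree_mul_le.trans ?_
      simp [hTd]
    have hdeg' : R'.natDegree ≤ d := by
      by_contra h
      push_neg at h
      have he : R'.natDegree = d+1 := le_antisymm hdegle h
      have : R'.leadingCoeff = 0 := by rw [leadingCoeff, he]; exact hcoeff
      have hz : R' = 0 := leadingCoeff_eq_zero.1 this
      rw [hz] at he
      simp at he
    have hRe : R = R' + C a * T := by rw [hR']; ring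
    rw [hRe, lambda_linear, ih R' hdeg' (by omega)]
    have : Lam n T = 0 := by
      have : ((d:ℤ)+1) = ((d+1:ℕ):ℤ) := by push_cast; ring
      rw [hT, this]
      exact lambda_T_poly n (d+1) (by omega)
    rw [this]
    ring








/-- the scaled Chebyshev polynomial `4^{-n} U_n(2x-1)`, the monic polynomial of degree `n`
minimizing the `L¹` norm on `[0,1]`. -/
noncomputable def wp (n : ℕ) : ℝ[X] :=
  C (((4:ℝ)^n)⁻¹) * (Chebyshev.U ℝ n).comp (2*X - 1)

lemma lin_eq : (2*X - 1 : ℝ[X]) = C 2 * X + C (-1) := by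
  rw [C2eq, map_neg, C_1]; ring

lemma lin_natDegree : (2*X - 1 : ℝ[X]).natDegree = 1 := by
  rw [lin_eq]; exact natDegree_linear (by norm_num)

lemma lin_leadingCoeff : (2*X - 1 : ℝ[X]).leadingCoeff = 2 := by
  rw [lin_eq]; exact leadingCoeff_linear (by norm_num)

lemma wq_natDegree (n : ℕ) : ((Chebyshev.U ℝ n).comp (2*X - 1)).natDegree = n := by
  rw [natDegree_comp, lin_natDegree, chebU_natDegree, mul_one]

lemma wq_leadingCoeff (n : ℕ) : ((Chebyshev.U ℝ n).comp (2*X - 1)).leadingCoeff = 4 ^ n := by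
  rw [leadingCoeff_comp (by rw [lin_natDegree]; norm_num), chebU_leadingCoeff,
    lin_leadingCoeff, chebU_natDegree, ← mul_pow]
  norm_num

lemma wp_monic (n : ℕ) : (wp n).Monic := by
  unfold wp Monic
  rw [leadingCoeff_mul, leadingCoeff_C, wq_leadingCoeff]
  field_simp

lemma wp_natDegree (n : ℕ) : (wp n).natDegree = n := by
  unfold wp
  rw [natDegree_C_mul (by positivity), wq_natDegree]

lemma wp_ne_zero (n : ℕ) : wp n ≠ 0 := (wp_monic n).ne_zero

lemma wp_coeff (n : ℕ) : (wp n).coeff n = 1 := by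
  have := wp_monic n
  rw [Monic, leadingCoeff, wp_natDegree] at this
  exact this

lemma wp_eval_cos (n : ℕ) (θ : ℝ) :
    (wp n).eval ((1 + Real.cos θ)/2) * Real.sin θ = ((4:ℝ)^n)⁻¹ * Real.sin ((n+1)*θ) := by
  have h : Polynomial.eval ((1 + Real.cos θ)/2) (2*X - 1 : ℝ[X]) = Real.cos θ := by
    simp; ring
  unfold wp
  rw [eval_mul, eval_C, eval_comp, h, mul_assoc]
  rw [Polynomial.Chebyshev.U_real_cos θ n]
  push_cast
  ring_nf

/-- the `k`-th node `(1 + cos((n+1-k)π/(n+1)))/2`; increasing in `k`, with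
`nd n 0 = 0`, `nd n (n+1) = 1`, and the roots of `wp n` are `nd n 1, …, nd n n`. -/
noncomputable def nd (n : ℕ) (k : ℕ) : ℝ :=
  (1 + Real.cos (((n:ℝ)+1-(k:ℝ))*(π/((n:ℝ)+1))))/2

lemma nd_mono (n : ℕ) {k l : ℕ} (hkl : k < l) (hl : l ≤ n+1) : nd n k < nd n l := by
  unfold nd
  have hn1 : (0:ℝ) < (n:ℝ)+1 := by positivity
  have hπ := Real.pi_pos
  have hkr : (k:ℝ) < (l:ℝ) := by exact_mod_cast hkl
  have hlr : (l:ℝ) ≤ (n:ℝ)+1 := by exact_mod_cast hl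
  have harg : ∀ m : ℕ, (m:ℝ) ≤ (n:ℝ)+1 → ((n:ℝ)+1-(m:ℝ))*(π/((n:ℝ)+1)) ∈ Icc 0 π := by
    intro m hm
    constructor
    · have : (0:ℝ) ≤ (n:ℝ)+1-(m:ℝ) := by linarith
      positivity
    · have h0 : (0:ℝ) ≤ (m:ℝ) := by positivity
      have hp : (0:ℝ) < π/((n:ℝ)+1) := by positivity
      calc ((n:ℝ)+1-(m:ℝ))*(π/((n:ℝ)+1)) ≤ ((n:ℝ)+1)*(π/((n:ℝ)+1)) := by nlinarith
        _ = π := by field_simp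
  have hlt : ((n:ℝ)+1-(l:ℝ))*(π/((n:ℝ)+1)) < ((n:ℝ)+1-(k:ℝ))*(π/((n:ℝ)+1)) := by
    have : (0:ℝ) < π/((n:ℝ)+1) := by positivity
    nlinarith
  have := Real.strictAntiOn_cos (harg l hlr) (harg k (by linarith)) hlt
  linarith

lemma nd_zero (n : ℕ) : nd n 0 = 0 := by
  unfold nd
  have hn1 : ((n:ℝ)+1) ≠ 0 := by positivity
  have : ((n:ℝ)+1-(0:ℕ))*(π/((n:ℝ)+1)) = π := by field_simp; simp
  rw [this, Real.cos_pi]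
  norm_num

lemma nd_last (n : ℕ) : nd n (n+1) = 1 := by
  unfold nd
  have : ((n:ℝ)+1-((n+1:ℕ):ℝ))*(π/((n:ℝ)+1)) = 0 := by push_cast; ring
  rw [this, Real.cos_zero]
  norm_num

lemma nd_mem (n k : ℕ) : nd n k ∈ Icc (0:ℝ) 1 := by
  unfold nd
  constructor
  · have := Real.neg_one_le_cos (((n:ℝ)+1-(k:ℝ))*(π/((n:ℝ)+1))); linarith
  · have := Real.cos_le_one (((n:ℝ)+1-(k:ℝ))*(π/((n:ℝ)+1))); linarith

lemma nd_eval_zero (n : ℕ) {k : ℕ} (h1 : 1 ≤ k) (hk : k ≤ n) : (wp n).eval (nd n k) = 0 := by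
  have key := wp_eval_cos n (((n:ℝ)+1-(k:ℝ))*(π/((n:ℝ)+1)))
  have hn1 : (0:ℝ) < (n:ℝ)+1 := by positivity
  have hπ := Real.pi_pos
  have hkr : (1:ℝ) ≤ (k:ℝ) := by exact_mod_cast h1
  have hkn : (k:ℝ) ≤ (n:ℝ) := by exact_mod_cast hk
  have hθpos : 0 < ((n:ℝ)+1-(k:ℝ))*(π/((n:ℝ)+1)) := by
    have : (0:ℝ) < (n:ℝ)+1-(k:ℝ) := by linarith
    positivity
  have hθlt : ((n:ℝ)+1-(k:ℝ))*(π/((n:ℝ)+1)) < π := by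
    have hp : (0:ℝ) < π/((n:ℝ)+1) := by positivity
    calc ((n:ℝ)+1-(k:ℝ))*(π/((n:ℝ)+1)) < ((n:ℝ)+1)*(π/((n:ℝ)+1)) := by nlinarith
      _ = π := by field_simp
  have hsin : 0 < Real.sin (((n:ℝ)+1-(k:ℝ))*(π/((n:ℝ)+1))) :=
    Real.sin_pos_of_pos_of_lt_pi hθpos hθlt
  have hval : ((n:ℝ)+1)*((((n:ℝ)+1-(k:ℝ)))*(π/((n:ℝ)+1))) = (((n+1-k:ℕ)):ℝ)*π := by
    have : (((n+1-k:ℕ)):ℝ) = (n:ℝ)+1-(k:ℝ) := by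
      push_cast [Nat.cast_sub (by omega : k ≤ n+1)]; ring
    rw [this]; field_simp
  rw [hval, Real.sin_nat_mul_pi, mul_zero] at key
  rcases mul_eq_zero.1 key with h | h
  · exact h
  · exact absurd h (ne_of_gt hsin)

lemma wp_root_eq_node (n : ℕ) (hn : 1 ≤ n) {x : ℝ} (hx : (wp n).eval x = 0) :
    ∃ k, 1 ≤ k ∧ k ≤ n ∧ x = nd n k := by
  classical
  set Z : Finset ℝ := (Finset.Icc 1 n).image (nd n) with hZ
  have hinj : Set.InjOn (nd n) ↑(Finset.Icc 1 n) := by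
    intro a ha b hb hab
    simp only [Finset.coe_Icc, Set.mem_Icc] at ha hb
    by_contra hne
    rcases Nat.lt_or_ge a b with h | h
    · exact absurd hab (ne_of_lt (nd_mono n h (by omega)))
    · have h' : b < a := by omega
      exact absurd hab.symm (ne_of_lt (nd_mono n h' (by omega)))
  have hcardZ : Z.card = n := by
    rw [hZ, Finset.card_image_of_injOn hinj, Nat.card_Icc]
    omega
  have hsub : Z ⊆ (wp n).roots.toFinset := by
    intro y hy
    rw [hZ, Finset.mem_image] at hy
    obtain ⟨k, hk, rfl⟩ := hy
    rw [Finset.mem_Icc] at hk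
    rw [Multiset.mem_toFinset, mem_roots (wp_ne_zero n)]
    exact nd_eval_zero n hk.1 hk.2
  have hcardR : (wp n).roots.toFinset.card ≤ n := by
    calc (wp n).roots.toFinset.card ≤ Multiset.card (wp n).roots :=
          (wp n).roots.toFinset_card_le
      _ ≤ (wp n).natDegree := (wp n).card_roots'
      _ = n := wp_natDegree n
  have hZeq : Z = (wp n).roots.toFinset :=
    Finset.eq_of_subset_of_card_le hsub (by omega)
  have hxZ : x ∈ Z := by
    rw [hZeq, Multiset.mem_toFinset, mem_roots (wp_ne_zero n)]
    exact hx
  rw [hZ, Finset.mem_image] at hxZ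
  obtain ⟨k, hk, hkx⟩ := hxZ
  rw [Finset.mem_Icc] at hk
  exact ⟨k, hk.1, hk.2, hkx.symm⟩



/-- sign of `wp n` -/
noncomputable def sg (n : ℕ) : ℝ → ℝ := fun x => if 0 ≤ (wp n).eval x then 1 else -1

lemma sg_mul_eval (n : ℕ) (x : ℝ) : (wp n).eval x * sg n x = |(wp n).eval x| := by
  unfold sg
  rcases le_or_gt 0 ((wp n).eval x) with h | h
  · rw [if_pos h, mul_one, abs_of_nonneg h]
  · rw [if_neg (not_le.2 h), abs_of_neg h]; ring

lemma sg_abs (n : ℕ) (x : ℝ) : |sg n x| = 1 := by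
  unfold sg; split <;> simp

lemma sg_measurable (n : ℕ) : Measurable (sg n) := by
  unfold sg
  refine Measurable.ite ?_ measurable_const measurable_const
  exact measurableSet_le measurable_const (wp n).continuous_aeval.measurable

lemma mul_sg_le_abs (n : ℕ) (g : ℝ → ℝ) (x : ℝ) : g x * sg n x ≤ |g x| := by
  calc g x * sg n x ≤ |g x * sg n x| := le_abs_self _
    _ = |g x| * |sg n x| := abs_mul _ _
    _ = |g x| := by rw [sg_abs, mul_one]

lemma node_angle (n k : ℕ) (hk : k ≤ n+1) :
    nd n k = (1 + Real.cos ((((n+1-k:ℕ)):ℝ)*(π/((n:ℝ)+1))))/2 := by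
  unfold nd
  have : (((n+1-k:ℕ)):ℝ) = (n:ℝ)+1-(k:ℝ) := by
    push_cast [Nat.cast_sub hk]; ring
  rw [this]

/-- midpoint of the `k`-th gap -/
noncomputable def md (n k : ℕ) : ℝ := (1 + Real.cos (((n:ℝ)-(k:ℝ)+1/2)*(π/((n:ℝ)+1))))/2

lemma md_mem (n : ℕ) {k : ℕ} (hk : k ≤ n) : md n k ∈ Ioo (nd n k) (nd n (k+1)) := by
  have hn1 : (0:ℝ) < (n:ℝ)+1 := by positivity
  have hπ := Real.pi_pos
  have hp : (0:ℝ) < π/((n:ℝ)+1) := by positivity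
  have hkn : (k:ℝ) ≤ (n:ℝ) := by exact_mod_cast hk
  have hmem : ∀ y : ℝ, 0 ≤ y → y ≤ (n:ℝ)+1 → y*(π/((n:ℝ)+1)) ∈ Icc 0 π := by
    intro y h0 h1
    refine ⟨by positivity, ?_⟩
    calc y*(π/((n:ℝ)+1)) ≤ ((n:ℝ)+1)*(π/((n:ℝ)+1)) := by nlinarith
      _ = π := by field_simp
  constructor
  · unfold nd md
    have h1 := Real.strictAntiOn_cos
      (hmem ((n:ℝ)-(k:ℝ)+1/2) (by linarith) (by linarith))
      (hmem ((n:ℝ)+1-(k:ℝ)) (by linarith) (by linarith))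
      (by nlinarith)
    linarith
  · unfold nd md
    have h1 := Real.strictAntiOn_cos
      (hmem ((n:ℝ)+1-((k:ℝ)+1)) (by linarith) (by linarith))
      (hmem ((n:ℝ)-(k:ℝ)+1/2) (by linarith) (by linarith))
      (by nlinarith)
    push_cast
    push_cast at h1
    linarith

lemma md_eval_sign (n : ℕ) {k : ℕ} (hk : k ≤ n) :
    0 < (wp n).eval (md n k) * (-1:ℝ)^(n+k) := by
  have hn1 : (0:ℝ) < (n:ℝ)+1 := by positivity
  have hπ := Real.pi_pos
  have hkn : (k:ℝ) ≤ (n:ℝ) := by exact_mod_cast hk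
  set θ : ℝ := ((n:ℝ)-(k:ℝ)+1/2)*(π/((n:ℝ)+1)) with hθ
  have key := wp_eval_cos n θ
  have hθpos : 0 < θ := by
    rw [hθ]
    have : (0:ℝ) < (n:ℝ)-(k:ℝ)+1/2 := by linarith
    positivity
  have hθlt : θ < π := by
    rw [hθ]
    have hp : (0:ℝ) < π/((n:ℝ)+1) := by positivity
    calc ((n:ℝ)-(k:ℝ)+1/2)*(π/((n:ℝ)+1)) < ((n:ℝ)+1)*(π/((n:ℝ)+1)) := by nlinarith
      _ = π := by field_simp
  have hsin : 0 < Real.sin θ := Real.sin_pos_of_pos_of_lt_pi hθpos hθlt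
  have harg : ((n:ℝ)+1)*θ = (((n-k:ℕ)):ℝ)*π + π/2 := by
    have : (((n-k:ℕ)):ℝ) = (n:ℝ)-(k:ℝ) := by push_cast [Nat.cast_sub hk]; ring
    rw [this, hθ]; field_simp
  have hsinval : Real.sin (((n:ℝ)+1)*θ) = (-1:ℝ)^(n+k) := by
    rw [harg, Real.sin_add, Real.sin_pi_div_two, Real.cos_pi_div_two,
      Real.sin_nat_mul_pi]
    have hcos : Real.cos ((((n-k:ℕ)):ℝ)*π) = (-1:ℝ)^(n-k) := by
      have := Real.cos_nat_mul_pi_sub 0 (n-k)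
      simpa using this
    rw [hcos]
    have hpow : (-1:ℝ)^(n-k) = (-1:ℝ)^(n+k) := by
      have h2 : n+k = (n-k) + 2*k := by omega
      rw [h2, pow_add, pow_mul, neg_one_sq, one_pow, mul_one]
    rw [hpow]; ring
  rw [hsinval] at key
  have hmd : md n k = (1 + Real.cos θ)/2 := rfl
  rw [hmd]
  rcases Nat.even_or_odd (n+k) with he | ho
  · rw [he.neg_one_pow] at key ⊢
    rw [mul_one] at key ⊢
    have h4 : (0:ℝ) < ((4:ℝ)^n)⁻¹ := by positivity
    nlinarith
  · rw [ho.neg_one_pow] at key ⊢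
    have h4 : (0:ℝ) < ((4:ℝ)^n)⁻¹ := by positivity
    nlinarith

lemma eval_ne_zero_on_piece (n : ℕ) (hn : 1 ≤ n) {k : ℕ} (hk : k ≤ n) {x : ℝ}
    (hx : x ∈ Ioo (nd n k) (nd n (k+1))) : (wp n).eval x ≠ 0 := by
  intro h0
  obtain ⟨j, hj1, hjn, rfl⟩ := wp_root_eq_node n hn h0
  rcases Nat.lt_or_ge j (k+1) with h | h
  · have : nd n j ≤ nd n k := by
      rcases Nat.lt_or_ge j k with h' | h'
      · exact le_of_lt (nd_mono n h' (by omega))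
      · have : j = k := by omega
        rw [this]
    linarith [hx.1]
  · have : nd n (k+1) ≤ nd n j := by
      rcases Nat.lt_or_ge (k+1) j with h' | h'
      · exact le_of_lt (nd_mono n h' (by omega))
      · have : j = k+1 := by omega
        rw [this]
    linarith [hx.2]

lemma sg_on_piece (n : ℕ) (hn : 1 ≤ n) {k : ℕ} (hk : k ≤ n) {x : ℝ}
    (hx : x ∈ Ioo (nd n k) (nd n (k+1))) : sg n x = (-1:ℝ)^(n+k) := by
  have hy := md_mem n hk
  have hysign := md_eval_sign n hk
  have hxne := eval_ne_zero_on_piece n hn hk hx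
  have hsame : 0 < (wp n).eval x * (wp n).eval (md n k) := by
    by_contra hc
    push_neg at hc
    have hyne := eval_ne_zero_on_piece n hn hk hy
    -- opposite signs: find a root in between
    have h0mem : (0:ℝ) ∈ uIcc ((wp n).eval x) ((wp n).eval (md n k)) := by
      rcases lt_or_gt_of_ne hxne with h | h <;> rcases lt_or_gt_of_ne hyne with h' | h'
      · nlinarith
      · exact ⟨by rw [min_le_iff]; left; linarith, by rw [le_max_iff]; right; linarith⟩
      · exact ⟨by rw [min_le_iff]; right; linarith, by rw [le_max_iff]; left; linarith⟩
      · nlinarith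
    have := intermediate_value_uIcc (a := x) (b := md n k)
      (f := fun t => (wp n).eval t) ((wp n).continuousOn) h0mem
    obtain ⟨z, hz, hz0⟩ := this
    have hzmem : z ∈ Ioo (nd n k) (nd n (k+1)) := by
      have : uIcc x (md n k) ⊆ Ioo (nd n k) (nd n (k+1)) :=
        (ordConnected_Ioo).uIcc_subset hx hy
      exact this hz
    exact eval_ne_zero_on_piece n hn hk hzmem hz0
  unfold sg
  rcases Nat.even_or_odd (n+k) with he | ho
  · rw [he.neg_one_pow] at hysign ⊢
    rw [mul_one] at hysign
    rw [if_pos (by nlinarith)]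
  · rw [ho.neg_one_pow] at hysign ⊢
    rw [if_neg (by nlinarith)]





/-- polynomial antiderivative -/
noncomputable def pint (q : ℝ[X]) : ℝ[X] := q.sum fun i a => C (a/(i+1)) * X^(i+1)

lemma pint_deriv (q : ℝ[X]) : derivative (pint q) = q := by
  unfold pint
  rw [Polynomial.sum_def, map_sum]
  conv_rhs => rw [← q.sum_C_mul_X_pow_eq]
  rw [Polynomial.sum_def]
  refine Finset.sum_congr rfl fun i hi => ?_
  rw [derivative_C_mul_X_pow, Nat.add_sub_cancel]
  congr 1
  push_cast
  rw [div_mul_cancel₀]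
  positivity

lemma pint_natDegree (q : ℝ[X]) : (pint q).natDegree ≤ q.natDegree + 1 := by
  unfold pint
  rw [Polynomial.sum_def]
  refine natDegree_sum_le_of_forall_le _ _ fun i hi => ?_
  refine natDegree_mul_le.trans ?_
  have h1 : (C (q.coeff i/(i+1))).natDegree = 0 := natDegree_C _
  have h2 : (X^(i+1) : ℝ[X]).natDegree = i+1 := natDegree_X_pow _
  rw [h1, h2]
  have := le_natDegree_of_mem_supp i hi
  omega

lemma poly_ftc (Q : ℝ[X]) (a b : ℝ) :
    ∫ x in a..b, (derivative Q).eval x = Q.eval b - Q.eval a := by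
  refine intervalIntegral.integral_eq_sub_of_hasDerivAt (fun x _ => Q.hasDerivAt x) ?_
  exact ((derivative Q).continuous_aeval).intervalIntegrable _ _

lemma poly_integral (q : ℝ[X]) (a b : ℝ) :
    ∫ x in a..b, q.eval x = (pint q).eval b - (pint q).eval a := by
  rw [← poly_ftc (pint q) a b, pint_deriv]

/-- The key orthogonality sum: the alternating sum of antiderivative increments vanishes. -/
lemma sum_eps_increments (n : ℕ) (Qi : ℝ[X]) (hQ : Qi.natDegree ≤ n) :
    ∑ k ∈ Finset.range (n+1), (-1:ℝ)^(n+k) * (Qi.eval (nd n (k+1)) - Qi.eval (nd n k)) = 0 := by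
  set R : ℝ[X] := Qi.comp (C (1/2:ℝ) * (1 + X)) with hR
  have hRdeg : R.natDegree ≤ n := by
    rw [hR]
    refine natDegree_comp_le.trans ?_
    have h1 : (C (1/2:ℝ) * (1 + X)).natDegree ≤ 1 := by
      refine natDegree_mul_le.trans ?_
      have : ((1:ℝ[X]) + X).natDegree ≤ 1 := by
        refine (natDegree_add_le _ _).trans ?_
        simp
      simp only [natDegree_C, zero_add]
      exact this
    calc Qi.natDegree * (C (1/2:ℝ) * (1 + X)).natDegree ≤ Qi.natDegree * 1 :=
          Nat.mul_le_mul_left _ h1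
      _ ≤ n := by omega
  have hRev : ∀ u : ℝ, R.eval u = Qi.eval ((1+u)/2) := by
    intro u
    rw [hR, eval_comp]
    congr 1
    simp
    ring
  have hnode : ∀ j : ℕ, j ≤ n+1 → nd n (n+1-j) = (1 + Real.cos (j*(π/((n:ℝ)+1))))/2 := by
    intro j hj
    unfold nd
    have : ((n+1-j:ℕ):ℝ) = (n:ℝ)+1-(j:ℝ) := by
      push_cast [Nat.cast_sub hj]; ring
    rw [this]
    ring_nf
  have key : (∑ j ∈ Finset.range (n+1), (-1:ℝ)^j *
      (R.eval (Real.cos (j*(π/(n+1)))) - R.eval (Real.cos ((j+1)*(π/(n+1)))))) = 0 := by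
    have hk := lambda_vanish n n R hRdeg le_rfl
    unfold Lam at hk
    exact hk
  rw [← key, ← Finset.sum_range_reflect]
  refine Finset.sum_congr rfl fun j hj => ?_
  rw [Finset.mem_range] at hj
  have hjn : j ≤ n := by omega
  have e1 : n + 1 - 1 - j = n - j := by omega
  rw [e1]
  have epow : (-1:ℝ)^(n+(n-j)) = (-1:ℝ)^j := by
    have h2 : n+(n-j) = 2*(n-j) + j := by omega
    rw [h2, pow_add, pow_mul, neg_one_sq, one_pow, one_mul]
  have en1 : n - j + 1 = n + 1 - j := by omega
  have en2 : n - j = n + 1 - (j+1) := by omega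
  rw [epow, en1, en2, hnode j (by omega), hnode (j+1) (by omega), hRev, hRev]
  push_cast
  ring

/-- value of the piece integrals of `wp` -/
lemma wp_piece_integral (n : ℕ) {k : ℕ} (hk : k ≤ n) :
    ∫ x in nd n k..nd n (k+1), (wp n).eval x
      = ((4:ℝ)^n)⁻¹ * (-1:ℝ)^(n+k) / ((n:ℝ)+1) := by
  set c : ℝ := ((4:ℝ)^n)⁻¹ * (2*((n:ℝ)+1))⁻¹ with hc
  set Om : ℝ[X] := C c * (Chebyshev.T ℝ ((n:ℤ)+1)).comp (2*X - 1) with hOm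
  have hder : derivative Om = wp n := by
    rw [hOm, derivative_C_mul, derivative_comp, Polynomial.Chebyshev.T_derivative_eq_U]
    have hidx : ((n:ℤ)+1-1) = (n:ℤ) := by ring
    rw [hidx]
    have hd : derivative (2*X - 1 : ℝ[X]) = 2 := by
      rw [lin_eq]
      simp [C2eq]
    rw [hd]
    unfold wp
    rw [mul_comp, intCast_comp]
    push_cast
    have hcast : ((n:ℝ[X])+1) = C ((n:ℝ)+1) := by rw [map_add, C_1, C_eq_natCast]
    rw [hcast]
    have hsc : (C c : ℝ[X]) * 2 * C ((n:ℝ)+1) = C (c * 2 * ((n:ℝ)+1)) := by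
      rw [← C2eq, ← Polynomial.C_mul, ← Polynomial.C_mul]
    rw [show C c * ((2:ℝ[X]) * (C ((n:ℝ)+1) * (Chebyshev.U ℝ (n:ℤ)).comp (2*X-1)))
        = (C c * 2 * C ((n:ℝ)+1)) * (Chebyshev.U ℝ (n:ℤ)).comp (2*X-1) from by ring]
    rw [hsc]
    congr 1
    rw [hc]
    have hn1 : ((n:ℝ)+1) ≠ 0 := by positivity
    field_simp
  have heval : ∀ j : ℕ, j ≤ n+1 → Om.eval (nd n j) = -c * (-1:ℝ)^(n+j) := by
    intro j hj
    rw [hOm, eval_mul, eval_C, eval_comp]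
    have h2 : Polynomial.eval (nd n j) (2*X - 1 : ℝ[X]) =
        Real.cos ((((n+1-j:ℕ)):ℝ)*(π/((n:ℝ)+1))) := by
      rw [node_angle n j hj]
      simp only [eval_sub, eval_mul, eval_one, eval_X, eval_ofNat]
      ring
    rw [h2]
    have h3 := Polynomial.Chebyshev.T_real_cos ((((n+1-j:ℕ)):ℝ)*(π/((n:ℝ)+1))) ((n:ℤ)+1)
    push_cast at h3
    rw [h3]
    have h4 : ((n:ℝ)+1) * ((((n+1-j:ℕ)):ℝ)*(π/((n:ℝ)+1))) = (((n+1-j:ℕ)):ℝ)*π := by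
      have hn1 : ((n:ℝ)+1) ≠ 0 := by positivity
      field_simp
    rw [h4]
    have h5 : Real.cos ((((n+1-j:ℕ)):ℝ)*π) = (-1:ℝ)^(n+1-j) := by
      have := Real.cos_nat_mul_pi_sub 0 (n+1-j)
      simpa using this
    rw [h5]
    have h6 : (-1:ℝ)^(n+1-j) = -(-1:ℝ)^(n+j) := by
      have h7 : n+1+j = (n+1-j) + 2*j := by omega
      calc (-1:ℝ)^(n+1-j) = (-1:ℝ)^(n+1-j) * ((-1:ℝ)^(2*j)) := by
            rw [pow_mul, neg_one_sq, one_pow, mul_one]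
        _ = (-1:ℝ)^(n+1+j) := by rw [← pow_add, ← h7]
        _ = -(-1:ℝ)^(n+j) := by rw [show n+1+j = (n+j)+1 by omega, pow_succ]; ring
    rw [h6]
    ring
  rw [← hder, poly_ftc, heval (k+1) (by omega), heval k (by omega)]
  have h8 : (-1:ℝ)^(n+(k+1)) = -(-1:ℝ)^(n+k) := by
    rw [show n+(k+1) = (n+k)+1 by omega, pow_succ]; ring
  rw [h8, hc]
  have hn1 : ((n:ℝ)+1) ≠ 0 := by positivity
  field_simp
  ring



lemma II_mul_sg (n : ℕ) {g : ℝ → ℝ} {a b : ℝ} (hg : ContinuousOn g (Set.uIcc a b)) :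
    IntervalIntegrable (fun x => g x * sg n x) volume a b := by
  rw [intervalIntegrable_iff]
  have hgi : IntegrableOn g (uIoc a b) volume := by
    have h := hg.intervalIntegrable (μ := volume)
    rwa [intervalIntegrable_iff] at h
  refine Integrable.mono' (g := fun x => |g x|) hgi.abs ?_ ?_
  · have h1 : AEStronglyMeasurable g (volume.restrict (uIoc a b)) :=
      (hg.mono Set.uIoc_subset_uIcc).aestronglyMeasurable measurableSet_uIoc
    exact h1.mul ((sg_measurable n).aestronglyMeasurable)
  · filter_upwards with x
    rw [Real.norm_eq_abs, abs_mul, sg_abs, mul_one]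

lemma uIcc_piece_sub (n : ℕ) {k : ℕ} (hk : k ≤ n) :
    Set.uIcc (nd n k) (nd n (k+1)) ⊆ Icc (0:ℝ) 1 := by
  rw [Set.uIcc_of_le (le_of_lt (nd_mono n (Nat.lt_succ_self k) (by omega)))]
  intro y hy
  exact ⟨le_trans (nd_mem n k).1 hy.1, le_trans hy.2 (nd_mem n (k+1)).2⟩

lemma integral_mul_sg_decomp (n : ℕ) (hn : 1 ≤ n) (g : ℝ → ℝ)
    (hg : ContinuousOn g (Icc 0 1)) :
    ∫ x in (0:ℝ)..1, g x * sg n x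
      = ∑ k ∈ Finset.range (n+1), ∫ x in nd n k..nd n (k+1), g x * sg n x := by
  have h := intervalIntegral.sum_integral_adjacent_intervals (a := nd n) (n := n+1)
    (μ := volume) (f := fun x => g x * sg n x) ?_
  · rw [h, nd_zero, nd_last]
  · intro k hk
    exact II_mul_sg n (hg.mono (uIcc_piece_sub n (by omega)))

lemma piece_sg_const (n : ℕ) (hn : 1 ≤ n) {k : ℕ} (hk : k ≤ n) (g : ℝ → ℝ) :
    ∫ x in nd n k..nd n (k+1), g x * sg n x
      = (-1:ℝ)^(n+k) * ∫ x in nd n k..nd n (k+1), g x := by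
  rw [← intervalIntegral.integral_const_mul]
  apply intervalIntegral.integral_congr_ae
  have hle : nd n k ≤ nd n (k+1) := le_of_lt (nd_mono n (Nat.lt_succ_self k) (by omega))
  have hne : ∀ᵐ x : ℝ ∂volume, x ∉ ({nd n (k+1)} : Set ℝ) :=
    measure_eq_zero_iff_ae_notMem.mp Real.volume_singleton
  filter_upwards [hne] with x hx hmem
  rw [Set.uIoc_of_le hle] at hmem
  have hxo : x ∈ Ioo (nd n k) (nd n (k+1)) :=
    ⟨hmem.1, lt_of_le_of_ne hmem.2 (by simpa using hx)⟩
  rw [sg_on_piece n hn hk hxo]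
  ring

lemma integral_poly_sg_zero (n : ℕ) (hn : 1 ≤ n) (q : ℝ[X]) (hq : q.natDegree + 1 ≤ n) :
    ∫ x in (0:ℝ)..1, q.eval x * sg n x = 0 := by
  rw [integral_mul_sg_decomp n hn _ (q.continuousOn)]
  have : ∀ k ∈ Finset.range (n+1),
      ∫ x in nd n k..nd n (k+1), q.eval x * sg n x
        = (-1:ℝ)^(n+k) * ((pint q).eval (nd n (k+1)) - (pint q).eval (nd n k)) := by
    intro k hk
    rw [Finset.mem_range] at hk
    rw [piece_sg_const n hn (by omega), poly_integral]
  rw [Finset.sum_congr rfl this]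
  exact sum_eps_increments n (pint q) (le_trans (pint_natDegree q) (by omega))

lemma integral_wp_sg (n : ℕ) (hn : 1 ≤ n) :
    ∫ x in (0:ℝ)..1, (wp n).eval x * sg n x = ((4:ℝ)^n)⁻¹ := by
  rw [integral_mul_sg_decomp n hn _ ((wp n).continuousOn)]
  have : ∀ k ∈ Finset.range (n+1),
      ∫ x in nd n k..nd n (k+1), (wp n).eval x * sg n x
        = ((4:ℝ)^n)⁻¹ / ((n:ℝ)+1) := by
    intro k hk
    rw [Finset.mem_range] at hk
    rw [piece_sg_const n hn (by omega), wp_piece_integral n (by omega)]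
    have : ((-1:ℝ)^(n+k)) * ((-1:ℝ)^(n+k)) = 1 := by
      rw [← pow_add, Even.neg_one_pow ⟨n+k, by ring⟩]
    field_simp
    nlinarith [this]
  rw [Finset.sum_congr rfl this, Finset.sum_const, Finset.card_range]
  have hn1 : ((n:ℝ)+1) ≠ 0 := by positivity
  rw [nsmul_eq_mul]
  push_cast
  field_simp

lemma integral_abs_wp (n : ℕ) (hn : 1 ≤ n) :
    ∫ x in (0:ℝ)..1, |(wp n).eval x| = ((4:ℝ)^n)⁻¹ := by
  rw [← integral_wp_sg n hn]
  congr 1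
  funext x
  rw [sg_mul_eval]




lemma rolle_step (gd : ℕ → ℝ → ℝ) (j : ℕ)
    (hcj : ContinuousOn (gd j) (Icc (0:ℝ) 1))
    (hdj : ∀ x ∈ Ioo (0:ℝ) 1, HasDerivAt (gd j) (gd (j+1) x) x)
    {a b : ℝ} (hab : a < b) (ha : a ∈ Icc (0:ℝ) 1) (hb : b ∈ Icc (0:ℝ) 1)
    (hza : gd j a = 0) (hzb : gd j b = 0) :
    ∃ c ∈ Ioo a b, gd (j+1) c = 0 := by
  have hsub : Icc a b ⊆ Icc (0:ℝ) 1 := Icc_subset_Icc ha.1 hb.2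
  have hsub2 : Ioo a b ⊆ Ioo (0:ℝ) 1 := fun x hx =>
    ⟨lt_of_le_of_lt ha.1 hx.1, lt_of_lt_of_le hx.2 hb.2⟩
  exact exists_hasDerivAt_eq_zero hab (hcj.mono hsub) (hza.trans hzb.symm)
    (fun x hx => hdj x (hsub2 hx))

lemma iter_rolle (N : ℕ) (gd : ℕ → ℝ → ℝ)
    (hc : ∀ k, k < N → ContinuousOn (gd k) (Icc (0:ℝ) 1))
    (hd : ∀ k, k < N → ∀ x ∈ Ioo (0:ℝ) 1, HasDerivAt (gd k) (gd (k+1) x) x) :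
    ∀ d j, j + d = N → 1 ≤ d → ∀ t : ℕ → ℝ,
      (∀ i, i ≤ d → t i ∈ Icc (0:ℝ) 1) →
      (∀ i, i < d → t i < t (i+1)) →
      (∀ i, i ≤ d → gd j (t i) = 0) →
      ∃ ξ ∈ Ioo (0:ℝ) 1, gd N ξ = 0 := by
  intro d
  induction d with
  | zero => intro j _ h1; omega
  | succ d ih =>
    intro j hjd _ t hmem hmono hzero
    have hjN : j < N := by omega
    rcases Nat.eq_zero_or_pos d with rfl | hd1
    · -- single Rolle step
      obtain ⟨c, hc1, hc2⟩ := rolle_step gd j (hc j hjN) (hd j hjN) (hmono 0 (by omega))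
        (hmem 0 (by omega)) (hmem 1 (by omega)) (hzero 0 (by omega)) (hzero 1 (by omega))
      have hj1 : j + 1 = N := by omega
      refine ⟨c, ?_, by rw [← hj1]; exact hc2⟩
      have h0 : t 0 ∈ Icc (0:ℝ) 1 := hmem 0 (by omega)
      have h1 : t 1 ∈ Icc (0:ℝ) 1 := hmem 1 (by omega)
      exact ⟨lt_of_le_of_lt h0.1 hc1.1, lt_of_lt_of_le hc1.2 h1.2⟩
    · have H : ∀ i, ∃ c, i < d + 1 → c ∈ Ioo (t i) (t (i+1)) ∧ gd (j+1) c = 0 := by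
        intro i
        by_cases h : i < d + 1
        · obtain ⟨c, hc1, hc2⟩ := rolle_step gd j (hc j hjN) (hd j hjN) (hmono i h)
            (hmem i (by omega)) (hmem (i+1) (by omega)) (hzero i (by omega))
            (hzero (i+1) (by omega))
          exact ⟨c, fun _ => ⟨hc1, hc2⟩⟩
        · exact ⟨0, fun h' => absurd h' h⟩
      choose u hu using H
      refine ih (j+1) (by omega) hd1 u ?_ ?_ ?_
      · intro i hi
        obtain ⟨h1, _⟩ := hu i (by omega)
        have ht1 : t i ∈ Icc (0:ℝ) 1 := hmem i (by omega)
        have ht2 : t (i+1) ∈ Icc (0:ℝ) 1 := hmem (i+1) (by omega)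
        exact ⟨le_of_lt (lt_of_le_of_lt ht1.1 h1.1), le_of_lt (lt_of_lt_of_le h1.2 ht2.2)⟩
      · intro i hi
        obtain ⟨h1, _⟩ := hu i (by omega)
        obtain ⟨h2, _⟩ := hu (i+1) (by omega)
        exact lt_trans h1.2 h2.1
      · intro i hi
        exact (hu i (by omega)).2

lemma rolle_finset (N : ℕ) (hN : 1 ≤ N) (gd : ℕ → ℝ → ℝ)
    (hc : ∀ k, k < N → ContinuousOn (gd k) (Icc (0:ℝ) 1))
    (hd : ∀ k, k < N → ∀ x ∈ Ioo (0:ℝ) 1, HasDerivAt (gd k) (gd (k+1) x) x)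
    (T : Finset ℝ) (hcard : T.card = N+1) (hsub : ↑T ⊆ Icc (0:ℝ) 1)
    (hz : ∀ x ∈ T, gd 0 x = 0) :
    ∃ ξ ∈ Ioo (0:ℝ) 1, gd N ξ = 0 := by
  classical
  let e := T.orderIsoOfFin hcard
  let t : ℕ → ℝ := fun i => if h : i < N+1 then (e ⟨i, h⟩ : ℝ) else 0
  have htT : ∀ i, i ≤ N → t i ∈ T := by
    intro i hi
    simp only [t, dif_pos (by omega : i < N+1)]
    exact (e ⟨i, by omega⟩).2
  refine iter_rolle N gd hc hd N 0 (by omega) hN t ?_ ?_ ?_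
  · intro i hi; exact hsub (htT i hi)
  · intro i hi
    simp only [t, dif_pos (by omega : i < N+1), dif_pos (by omega : i+1 < N+1)]
    have := e.strictMono (show (⟨i, by omega⟩ : Fin (N+1)) < ⟨i+1, by omega⟩ by
      simp [Fin.lt_def])
    exact_mod_cast this
  · intro i hi; exact hz _ (htT i hi)

lemma iterate_deriv_eq_C (p : ℝ[X]) (N : ℕ) (hdeg : p.natDegree ≤ N) :
    derivative^[N] p = C ((N ! : ℝ) * p.coeff N) := by
  ext m
  rw [Polynomial.coeff_iterate_derivative]
  rcases Nat.eq_zero_or_pos m with rfl | hm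
  · rw [zero_add, Nat.descFactorial_self, coeff_C, if_pos rfl, nsmul_eq_mul]
  · rw [coeff_eq_zero_of_natDegree_lt (by omega : p.natDegree < m + N), smul_zero,
      coeff_C, if_neg (by omega)]

lemma isdn_cont {n : ℕ} (hn : 1 ≤ n) {fd : ℕ → ℝ → ℝ} (h : IsDn n 0 1 fd) :
    ∀ k, k < n → ContinuousOn (fd k) (Icc (0:ℝ) 1) := by
  intro k hk
  rcases Nat.lt_or_ge (k+1) n with h1 | h1
  · exact fun x hx => ((h.1 k h1 x hx).continuousWithinAt)
  · have : k = n - 1 := by omega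
    rw [this]; exact h.2.1
lemma isdn_deriv {n : ℕ} (hn : 1 ≤ n) {fd : ℕ → ℝ → ℝ} (h : IsDn n 0 1 fd) :
    ∀ k, k < n → ∀ x ∈ Ioo (0:ℝ) 1, HasDerivAt (fd k) (fd (k+1) x) x := by
  intro k hk x hx
  rcases Nat.lt_or_ge (k+1) n with h1 | h1
  · exact (h.1 k h1 x (Ioo_subset_Icc_self hx)).hasDerivAt (Icc_mem_nhds hx.1 hx.2)
  · have hk1 : k = n - 1 := by omega
    have hk2 : k + 1 = n := by omega
    rw [hk1, (by omega : n - 1 + 1 = n)]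
    exact h.2.2 x hx


lemma nd_injOn (n : ℕ) : Set.InjOn (nd n) ↑(Finset.Icc 1 n) := by
  intro a ha b hb hab
  simp only [Finset.coe_Icc, Set.mem_Icc] at ha hb
  by_contra hne
  rcases Nat.lt_or_ge a b with h | h
  · exact absurd hab (ne_of_lt (nd_mono n h (by omega)))
  · have h' : b < a := by omega
    exact absurd hab.symm (ne_of_lt (nd_mono n h' (by omega)))

lemma main_pos (n : ℕ) (hn : 1 ≤ n) (fd : ℕ → ℝ → ℝ) (h : IsDn n 0 1 fd)
    (m : ℝ) (hm : 0 < m) (hlow : ∀ t ∈ Ioo (0:ℝ) 1, m ≤ fd n t) :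
    m / (n ! : ℝ) * ((4:ℝ)^n)⁻¹ ≤ ∫ t in (0:ℝ)..1, |fd 0 t| := by
  classical
  have hfact : (0:ℝ) < (n ! : ℝ) := by exact_mod_cast Nat.factorial_pos n
  set P : ℝ[X] := Lagrange.interpolate (Finset.Icc 1 n) (nd n) (fun k => fd 0 (nd n k)) with hP
  have hcardIcc : (Finset.Icc 1 n).card = n := by rw [Nat.card_Icc]; omega
  have hPdeg : P.degree < (n : ℕ) := by
    have := Lagrange.degree_interpolate_lt (r := fun k => fd 0 (nd n k)) (nd_injOn n)
    rwa [hcardIcc] at this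
  have hPnat : P.natDegree + 1 ≤ n := by
    rcases eq_or_ne P 0 with h0 | h0
    · rw [h0, natDegree_zero]; omega
    · have := (natDegree_lt_iff_degree_lt h0).2 hPdeg
      omega
  have hPnode : ∀ k, 1 ≤ k → k ≤ n → P.eval (nd n k) = fd 0 (nd n k) := by
    intro k h1 h2
    exact Lagrange.eval_interpolate_at_node _ (nd_injOn n) (Finset.mem_Icc.2 ⟨h1, h2⟩)
  -- pointwise inequality
  have hpt : ∀ x ∈ Icc (0:ℝ) 1,
      0 ≤ (fd 0 x - P.eval x - m/(n ! : ℝ) * (wp n).eval x) * sg n x := by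
    intro x hx
    rcases eq_or_ne ((wp n).eval x) 0 with hw0 | hwne
    · obtain ⟨k, hk1, hk2, rfl⟩ := wp_root_eq_node n hn hw0
      rw [hPnode k hk1 hk2, hw0]
      rw [show fd 0 (nd n k) - fd 0 (nd n k) - m/(n ! : ℝ) * 0 = 0 from by ring, zero_mul]
    · set c : ℝ := (fd 0 x - P.eval x) / (wp n).eval x with hc
      have hfx : fd 0 x - P.eval x = c * (wp n).eval x := (div_mul_cancel₀ _ hwne).symm
      have hcm : m / (n ! : ℝ) ≤ c := by
        by_contra hlt
        push_neg at hlt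
        set q : ℝ[X] := P + Polynomial.C c * wp n with hq
        set gd : ℕ → ℝ → ℝ := fun k y => fd k y - (derivative^[k] q).eval y with hgd
        have hgc : ∀ k, k < n → ContinuousOn (gd k) (Icc (0:ℝ) 1) := fun k hk =>
          (isdn_cont hn h k hk).sub ((derivative^[k] q).continuousOn)
        have hgd' : ∀ k, k < n → ∀ y ∈ Ioo (0:ℝ) 1, HasDerivAt (gd k) (gd (k+1) y) y := by
          intro k hk y hy
          have h2 := (isdn_deriv hn h k hk y hy).sub ((derivative^[k] q).hasDerivAt y)
          have h3 : gd (k+1) y = fd (k+1) y - (derivative (derivative^[k] q)).eval y := by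
            rw [hgd]
            simp only
            rw [Function.iterate_succ_apply']
          rw [h3]
          exact h2
        set T : Finset ℝ := insert x ((Finset.Icc 1 n).image (nd n)) with hT
        have hxni : x ∉ (Finset.Icc 1 n).image (nd n) := by
          intro hmem
          obtain ⟨k, hk, hkx⟩ := Finset.mem_image.1 hmem
          rw [Finset.mem_Icc] at hk
          exact hwne (hkx ▸ nd_eval_zero n hk.1 hk.2)
        have hcard : T.card = n + 1 := by
          rw [hT, Finset.card_insert_of_notMem hxni,
            Finset.card_image_of_injOn (nd_injOn n), hcardIcc]
        have hsub : ↑T ⊆ Icc (0:ℝ) 1 := by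
          intro y hy
          rw [hT, Finset.coe_insert, Set.mem_insert_iff] at hy
          rcases hy with rfl | hy
          · exact hx
          · obtain ⟨k, _, rfl⟩ := Finset.mem_image.1 (by exact_mod_cast hy)
            exact nd_mem n k
        have hz : ∀ y ∈ T, gd 0 y = 0 := by
          intro y hy
          rw [hT, Finset.mem_insert] at hy
          rw [hgd]
          simp only [Function.iterate_zero_apply]
          rcases hy with rfl | hy
          · rw [hq, eval_add, eval_mul, eval_C]
            rw [← hfx]
            ring
          · obtain ⟨k, hk, rfl⟩ := Finset.mem_image.1 hy
            rw [Finset.mem_Icc] at hk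
            rw [hq, eval_add, eval_mul, eval_C, nd_eval_zero n hk.1 hk.2,
              hPnode k hk.1 hk.2]
            ring
        obtain ⟨ξ, hξ, h0⟩ := rolle_finset n hn gd hgc hgd' T hcard hsub hz
        have hqdeg : q.natDegree ≤ n := by
          rw [hq]
          refine (natDegree_add_le _ _).trans ?_
          simp only [max_le_iff]
          constructor
          · omega
          · refine natDegree_mul_le.trans ?_
            rw [natDegree_C, wp_natDegree]
            omega
        have hqc : q.coeff n = c := by
          rw [hq, coeff_add, coeff_C_mul, wp_coeff,
            coeff_eq_zero_of_degree_lt hPdeg]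
          ring
        rw [hgd] at h0
        simp only at h0
        rw [iterate_deriv_eq_C q n hqdeg, hqc, eval_C, sub_eq_zero] at h0
        have hlow' := hlow ξ hξ
        rw [h0] at hlow'
        have : (n ! : ℝ) * c < (n ! : ℝ) * (m / (n ! : ℝ)) :=
          mul_lt_mul_of_pos_left hlt hfact
        rw [mul_div_cancel₀ _ (ne_of_gt hfact)] at this
        linarith
      have hexp : (fd 0 x - P.eval x - m/(n ! : ℝ) * (wp n).eval x) * sg n x
          = (c - m/(n ! : ℝ)) * ((wp n).eval x * sg n x) := by
        rw [hfx]; ring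
      rw [hexp, sg_mul_eval]
      exact mul_nonneg (by linarith) (abs_nonneg _)
  -- integrability
  have hu : Set.uIcc (0:ℝ) 1 = Icc (0:ℝ) 1 := uIcc_of_le zero_le_one
  have hf0cont : ContinuousOn (fd 0) (Icc (0:ℝ) 1) := isdn_cont hn h 0 (by omega)
  have hIf : IntervalIntegrable (fun x => |fd 0 x|) volume 0 1 := by
    apply ContinuousOn.intervalIntegrable
    rw [hu]
    exact hf0cont.abs
  have hIfs : IntervalIntegrable (fun x => fd 0 x * sg n x) volume 0 1 :=
    II_mul_sg n (by rw [hu]; exact hf0cont)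
  have hIPs : IntervalIntegrable (fun x => P.eval x * sg n x) volume 0 1 :=
    II_mul_sg n (P.continuousOn)
  have hIws : IntervalIntegrable (fun x => (wp n).eval x * sg n x) volume 0 1 :=
    II_mul_sg n ((wp n).continuousOn)
  have hIhs : IntervalIntegrable
      (fun x => (fd 0 x - P.eval x - m/(n ! : ℝ) * (wp n).eval x) * sg n x) volume 0 1 := by
    have : (fun x => (fd 0 x - P.eval x - m/(n ! : ℝ) * (wp n).eval x) * sg n x)
        = fun x => fd 0 x * sg n x - P.eval x * sg n x
            - m/(n ! : ℝ) * ((wp n).eval x * sg n x) := by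
      funext x; ring
    rw [this]
    exact (hIfs.sub hIPs).sub (hIws.const_mul _)
  -- assembly
  have step1 : ∫ x in (0:ℝ)..1, fd 0 x * sg n x ≤ ∫ x in (0:ℝ)..1, |fd 0 x| := by
    apply intervalIntegral.integral_mono_on zero_le_one hIfs hIf
    intro x _
    exact mul_sg_le_abs n (fd 0) x
  have step2 : ∫ x in (0:ℝ)..1, fd 0 x * sg n x
      = (∫ x in (0:ℝ)..1, (fd 0 x - P.eval x - m/(n ! : ℝ) * (wp n).eval x) * sg n x)
        + (∫ x in (0:ℝ)..1, P.eval x * sg n x)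
        + m/(n ! : ℝ) * ∫ x in (0:ℝ)..1, (wp n).eval x * sg n x := by
    rw [← intervalIntegral.integral_const_mul, ← intervalIntegral.integral_add hIhs hIPs,
      ← intervalIntegral.integral_add (hIhs.add hIPs) (hIws.const_mul _)]
    congr 1
    funext x
    ring
  have step3 : 0 ≤ ∫ x in (0:ℝ)..1,
      (fd 0 x - P.eval x - m/(n ! : ℝ) * (wp n).eval x) * sg n x :=
    intervalIntegral.integral_nonneg zero_le_one hpt
  rw [integral_poly_sg_zero n hn P hPnat, integral_wp_sg n hn] at step2
  calc m / (n ! : ℝ) * ((4:ℝ)^n)⁻¹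
      ≤ ∫ x in (0:ℝ)..1, fd 0 x * sg n x := by rw [step2]; linarith
    _ ≤ ∫ x in (0:ℝ)..1, |fd 0 x| := step1



lemma part1 (n : ℕ) (hn : 1 ≤ n) (fd : ℕ → ℝ → ℝ) (h : IsDn n 0 1 fd) :
    mIoo n 0 1 fd ≤ 2^(2*n) * (n ! : ℝ) * ∫ t in (0:ℝ)..1, |fd 0 t| := by
  have hint : 0 ≤ ∫ t in (0:ℝ)..1, |fd 0 t| :=
    intervalIntegral.integral_nonneg zero_le_one (fun x _ => abs_nonneg _)
  have hfact : (0:ℝ) < (n ! : ℝ) := by exact_mod_cast Nat.factorial_pos n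
  have hpow : (4:ℝ)^n = 2^(2*n) := by rw [pow_mul]; norm_num
  set m0 := mIoo n 0 1 fd with hm0
  rcases le_or_gt m0 0 with hm | hm
  · calc m0 ≤ 0 := hm
      _ ≤ _ := by positivity
  · have hbdd : BddBelow ((fun t => |fd n t|) '' Ioo (0:ℝ) 1) := by
      refine ⟨0, ?_⟩
      rintro y ⟨t, _, rfl⟩
      exact abs_nonneg _
    have hlb : ∀ t ∈ Ioo (0:ℝ) 1, m0 ≤ |fd n t| := by
      intro t ht
      exact csInf_le hbdd ⟨t, ht, rfl⟩
    have key : m0 / (n ! : ℝ) * ((4:ℝ)^n)⁻¹ ≤ ∫ t in (0:ℝ)..1, |fd 0 t| := by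
      by_cases hall : ∀ t ∈ Ioo (0:ℝ) 1, m0 ≤ fd n t
      · exact main_pos n hn fd h m0 hm hall
      · push_neg at hall
        obtain ⟨t2, ht2, hv2⟩ := hall
        have h2 : fd n t2 ≤ -m0 := by
          have := hlb t2 ht2
          rcases abs_cases (fd n t2) with ⟨he, _⟩ | ⟨he, _⟩ <;> linarith
        have hallneg : ∀ t ∈ Ioo (0:ℝ) 1, m0 ≤ -(fd n t) := by
          intro t ht
          by_contra hcon
          push_neg at hcon
          have h1 : m0 ≤ fd n t := by
            have := hlb t ht
            rcases abs_cases (fd n t) with ⟨he, _⟩ | ⟨he, _⟩ <;> linarith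
          have hder : ∀ a b : ℝ, a ∈ Ioo (0:ℝ) 1 → b ∈ Ioo (0:ℝ) 1 →
              ∀ x ∈ Icc a b, HasDerivWithinAt (fd (n-1)) (fd n x) (Icc a b) x := by
            intro a b ha hb x hx
            have hxI : x ∈ Ioo (0:ℝ) 1 :=
              ⟨lt_of_lt_of_le ha.1 hx.1, lt_of_le_of_lt hx.2 hb.2⟩
            exact (h.2.2 x hxI).hasDerivWithinAt
          have hzero : ∃ ξ ∈ Ioo (0:ℝ) 1, fd n ξ = 0 := by
            rcases le_or_gt t t2 with hor | hor
            · obtain ⟨ξ, hξmem, hξ0⟩ := exists_hasDerivWithinAt_eq_of_lt_of_gt hor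
                (hder t t2 ht ht2) (show (0:ℝ) < fd n t by linarith)
                (show fd n t2 < 0 by linarith)
              exact ⟨ξ, ⟨lt_trans ht.1 hξmem.1, lt_trans hξmem.2 ht2.2⟩, hξ0⟩
            · obtain ⟨ξ, hξmem, hξ0⟩ := exists_hasDerivWithinAt_eq_of_gt_of_lt (le_of_lt hor)
                (hder t2 t ht2 ht) (show fd n t2 < 0 by linarith)
                (show (0:ℝ) < fd n t by linarith)
              exact ⟨ξ, ⟨lt_trans ht2.1 hξmem.1, lt_trans hξmem.2 ht.2⟩, hξ0⟩
          obtain ⟨ξ, hξI, hξ0⟩ := hzero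
          have := hlb ξ hξI
          rw [hξ0] at this
          simp at this
          linarith
        have hneg : IsDn n 0 1 (fun k x => -(fd k x)) :=
          ⟨fun k hk x hx => (h.1 k hk x hx).neg, h.2.1.neg, fun x hx => (h.2.2 x hx).neg⟩
        have hres := main_pos n hn _ hneg m0 hm (fun t ht => hallneg t ht)
        simpa using hres
    calc m0 = ((n ! : ℝ) * (4:ℝ)^n) * (m0/(n ! : ℝ) * ((4:ℝ)^n)⁻¹) := by
          field_simp
      _ ≤ ((n ! : ℝ) * (4:ℝ)^n) * ∫ t in (0:ℝ)..1, |fd 0 t| := by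
          apply mul_le_mul_of_nonneg_left key (by positivity)
      _ = 2^(2*n) * (n ! : ℝ) * ∫ t in (0:ℝ)..1, |fd 0 t| := by rw [← hpow]; ring

/-- the extremal function: `n! · 4^{-n} U_n(2x-1)` and its derivatives -/
noncomputable def sfd (n : ℕ) : ℕ → ℝ → ℝ :=
  fun k x => (derivative^[k] (Polynomial.C (n ! : ℝ) * wp n)).eval x

lemma sfd_isdn (n : ℕ) (hn : 1 ≤ n) : IsDn n 0 1 (sfd n) := by
  refine ⟨?_, ?_, ?_⟩
  · intro k hk x hx
    have h2 : sfd n (k+1) x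
        = (derivative (derivative^[k] (Polynomial.C (n ! : ℝ) * wp n))).eval x := by
      unfold sfd
      rw [Function.iterate_succ_apply']
    rw [h2]
    exact ((derivative^[k] (Polynomial.C (n ! : ℝ) * wp n)).hasDerivAt x).hasDerivWithinAt
  · exact (derivative^[n-1] (Polynomial.C (n ! : ℝ) * wp n)).continuousOn
  · intro x hx
    have h2 : sfd n n x
        = (derivative (derivative^[n-1] (Polynomial.C (n ! : ℝ) * wp n))).eval x := by
      unfold sfd
      have h3 : ∀ p : ℝ[X], (⇑derivative)^[n] p = derivative ((⇑derivative)^[n-1] p) := by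
        intro p
        conv_lhs => rw [show n = (n-1)+1 from by omega]
        rw [Function.iterate_succ_apply']
      rw [h3]
    rw [h2]
    exact (derivative^[n-1] (Polynomial.C (n ! : ℝ) * wp n)).hasDerivAt x

lemma sfd_deg (n : ℕ) : (Polynomial.C (n ! : ℝ) * wp n).natDegree ≤ n :=
  natDegree_mul_le.trans (by rw [natDegree_C, wp_natDegree]; omega)

lemma sfd_nonzero (n : ℕ) (hn : 1 ≤ n) : ∃ x ∈ Icc (0:ℝ) 1, sfd n 0 x ≠ 0 := by
  have hfact : (0:ℝ) < (n ! : ℝ) := by exact_mod_cast Nat.factorial_pos n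
  have h1 := md_mem n (le_refl n)
  have h2 := md_eval_sign n (le_refl n)
  rw [Even.neg_one_pow ⟨n, by ring⟩, mul_one] at h2
  refine ⟨md n n, ⟨le_of_lt (lt_of_le_of_lt (nd_mem n n).1 h1.1),
    le_of_lt (lt_of_lt_of_le h1.2 (nd_mem n (n+1)).2)⟩, ?_⟩
  unfold sfd
  simp only [Function.iterate_zero_apply, eval_mul, eval_C]
  exact ne_of_gt (mul_pos hfact h2)

lemma sfd_m (n : ℕ) (hn : 1 ≤ n) : mIoo n 0 1 (sfd n) = ((n ! : ℝ))^2 := by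
  have hval : ∀ x : ℝ, sfd n n x = ((n ! : ℝ))^2 := by
    intro x
    unfold sfd
    rw [iterate_deriv_eq_C _ n (sfd_deg n), eval_C, coeff_C_mul, wp_coeff]
    ring
  unfold mIoo
  have himg : (fun t => |sfd n n t|) '' Ioo (0:ℝ) 1 = {((n ! : ℝ))^2} := by
    rw [show (fun t : ℝ => |sfd n n t|) = fun _ => ((n ! : ℝ))^2 from
      funext fun t => by rw [hval t, abs_of_nonneg (by positivity)]]
    exact Set.Nonempty.image_const (Set.nonempty_Ioo.2 one_pos) _
  rw [himg, csInf_singleton]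

lemma sfd_int (n : ℕ) (hn : 1 ≤ n) :
    ∫ t in (0:ℝ)..1, |sfd n 0 t| = (n ! : ℝ) * ((4:ℝ)^n)⁻¹ := by
  have habs : ∀ t : ℝ, |sfd n 0 t| = (n ! : ℝ) * |(wp n).eval t| := by
    intro t
    unfold sfd
    simp only [Function.iterate_zero_apply, eval_mul, eval_C, abs_mul]
    rw [abs_of_nonneg (by positivity : (0:ℝ) ≤ (n ! : ℝ))]
  simp only [habs]
  rw [intervalIntegral.integral_const_mul, integral_abs_wp n hn]


end Stmt13Aux

/-- `C(n,1) = 2^{2n} n!`: every not-identically-zero `f ∈ 𝒟ⁿ([0,1])` satisfies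
`m_n(f) ≤ 2^{2n} n! · ∫_0^1 |f(t)| dt`, and this constant is smallest. -/
theorem stmt13 (n : ℕ) (hn : 1 ≤ n) :
    (∀ fd : ℕ → ℝ → ℝ, IsDn n 0 1 fd → (∃ x ∈ Set.Icc (0:ℝ) 1, fd 0 x ≠ 0) →
      mIoo n 0 1 fd ≤ 2 ^ (2 * n) * (n ! : ℝ) * ∫ t in (0:ℝ)..1, |fd 0 t|) ∧
    (∀ C : ℝ, (∀ fd : ℕ → ℝ → ℝ, IsDn n 0 1 fd → (∃ x ∈ Set.Icc (0:ℝ) 1, fd 0 x ≠ 0) →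
        mIoo n 0 1 fd ≤ C * ∫ t in (0:ℝ)..1, |fd 0 t|) →
      (2 ^ (2 * n) * (n ! : ℝ)) ≤ C) := by
  constructor
  · intro fd h _
    exact Stmt13Aux.part1 n hn fd h
  · intro C hC
    have h := hC (Stmt13Aux.sfd n) (Stmt13Aux.sfd_isdn n hn) (Stmt13Aux.sfd_nonzero n hn)
    rw [Stmt13Aux.sfd_m n hn, Stmt13Aux.sfd_int n hn] at h
    have hfact : (0:ℝ) < (n ! : ℝ) := by exact_mod_cast Nat.factorial_pos n
    have h4 : (0:ℝ) < (4:ℝ)^n := by positivity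
    have hpow : (4:ℝ)^n = 2^(2*n) := by rw [pow_mul]; norm_num
    have h2 : (0:ℝ) < (n ! : ℝ) * ((4:ℝ)^n)⁻¹ := by positivity
    rw [← hpow]
    refine (mul_le_mul_iff_of_pos_right h2).1 ?_
    calc (4:ℝ)^n * (n ! : ℝ) * ((n ! : ℝ) * ((4:ℝ)^n)⁻¹) = ((n ! : ℝ))^2 := by
          field_simp
      _ ≤ C * ((n ! : ℝ) * ((4:ℝ)^n)⁻¹) := h
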